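/- In the group G of elements 1 + I (noncommutative formal power series with constant term 1) under multiplication, the elements g_n := exp(a_n X_n t^n) for distinct indices n and nonzero a_n ∈ ℂ satisfy: a finite product g_{k_1}^{ε_1} ··· g_{k_l}^{ε_l} with k_i ≠ k_{i+1} for all i and all exponents corresponding to nonzero coefficients is never equal to 1. Equivalently, the subgroups {exp(a X_n t^n) : a ∈ ℂ} ≅ (ℂ,+) for distinct n generate their free product inside G. -/

import Mathlib

open Finset PowerSeries

/-- The element `exp(a X_n t^n) = Σ_j (a^j/j!) X_n^j t^{nj}` of the algebra
`ℂ⟨X_1,X_2,…⟩[[t]]`, modelled as a formal power series in the central variable `t` with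
coefficients in the free algebra `FreeAlgebra ℂ ℕ` on the variables `X_n`. -/
noncomputable def expGen (n : ℕ) (a : ℂ) : PowerSeries (FreeAlgebra ℂ ℕ) :=
  PowerSeries.mk fun m =>
    if n ∣ m then (a ^ (m / n) / ((m / n).factorial : ℂ)) • (FreeAlgebra.ι ℂ n) ^ (m / n)
    else 0

namespace Stmt13Aux

abbrev R := MonoidAlgebra ℂ (FreeMonoid ℕ)

noncomputable def e : FreeAlgebra ℂ ℕ ≃ₐ[ℂ] R :=
  FreeAlgebra.equivMonoidAlgebraFreeMonoid

lemma e_ι (n : ℕ) : e (FreeAlgebra.ι ℂ n) = MonoidAlgebra.single (FreeMonoid.of n) 1 := by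
  simp [e, FreeAlgebra.equivMonoidAlgebraFreeMonoid, MonoidAlgebra.of_apply]

lemma of_pow (n p : ℕ) :
    (FreeMonoid.of n) ^ p = FreeMonoid.ofList (List.replicate p n) := by
  induction p with
  | zero => rfl
  | succ p ih =>
    rw [pow_succ', ih, List.replicate_succ, FreeMonoid.ofList_cons]

noncomputable def S (n : ℕ) (a : ℂ) : PowerSeries R :=
  PowerSeries.map (e.toAlgHom.toRingHom) (expGen n a)

lemma coeff_S (n : ℕ) (a : ℂ) (m : ℕ) :
    (PowerSeries.coeff m) (S n a) =
      if n ∣ m then (a ^ (m / n) / ((m / n).factorial : ℂ)) •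
        MonoidAlgebra.single (FreeMonoid.ofList (List.replicate (m / n) n)) (1 : ℂ)
      else 0 := by
  rw [S, PowerSeries.coeff_map, expGen, PowerSeries.coeff_mk]
  split
  · show e _ = _
    rw [map_smul, map_pow, e_ι, MonoidAlgebra.single_pow, one_pow, of_pow]
  · show e _ = _
    rw [map_zero]

lemma single_mul_apply_list (u : List ℕ) (c : ℂ) (x : R) (w : List ℕ) :
    (MonoidAlgebra.single (FreeMonoid.ofList u) c * x).coeff (FreeMonoid.ofList w) =
      if u <+: w then c * x.coeff (FreeMonoid.ofList (List.drop u.length w)) else 0 := by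
  split_ifs with h
  · obtain ⟨v, rfl⟩ := h
    rw [MonoidAlgebra.coeff_single_mul_eq_mul_coeff (FreeMonoid.ofList v)]
    · rw [List.drop_left]
    · intro b _
      constructor
      · intro hb
        have : u ++ FreeMonoid.toList b = u ++ v := congrArg FreeMonoid.toList hb
        have := List.append_cancel_left this
        exact FreeMonoid.toList.injective (by simpa using this)
      · rintro rfl
        rfl
  · apply MonoidAlgebra.single_mul_apply_of_not_exists_mul
    rintro ⟨d, hd⟩
    apply h
    refine ⟨FreeMonoid.toList d, ?_⟩
    have := congrArg FreeMonoid.toList hd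
    exact (by simpa using this : w = u ++ FreeMonoid.toList d).symm

noncomputable def T (L : List (ℕ × ℂ)) : PowerSeries R :=
  (L.map fun p => S p.1 p.2).prod

noncomputable def C (L : List (ℕ × ℂ)) (N : ℕ) (w : List ℕ) : ℂ :=
  ((PowerSeries.coeff N) (T L)).coeff (FreeMonoid.ofList w)

lemma C_nil (N : ℕ) (w : List ℕ) :
    C [] N w = if N = 0 ∧ w = [] then 1 else 0 := by
  rw [C, T]
  simp only [List.map_nil, List.prod_nil, PowerSeries.coeff_one]
  rcases eq_or_ne N 0 with rfl | hN
  · rw [if_pos rfl, MonoidAlgebra.one_def]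
    rcases eq_or_ne w [] with rfl | hw
    · rw [if_pos (⟨rfl, rfl⟩ : (0:ℕ) = 0 ∧ ([] : List ℕ) = [])]
      exact Finsupp.single_eq_same
    · rw [if_neg (by simp [hw])]
      refine Finsupp.single_eq_of_ne ?_
      intro hc
      apply hw
      have := congrArg FreeMonoid.toList hc
      simpa using this.symm
  · rw [if_neg hN, if_neg (by simp [hN]), MonoidAlgebra.coeff_zero, Finsupp.coe_zero, Pi.zero_apply]

lemma C_cons (n : ℕ) (a : ℂ) (L : List (ℕ × ℂ)) (N : ℕ) (w : List ℕ) :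
    C ((n, a) :: L) N w = ∑ p ∈ antidiagonal N,
      (if n ∣ p.1 ∧ List.replicate (p.1 / n) n <+: w
       then (a ^ (p.1 / n) / ((p.1 / n).factorial : ℂ)) * C L p.2 (w.drop (p.1 / n))
       else 0) := by
  rw [C, T, List.map_cons, List.prod_cons, PowerSeries.coeff_mul, MonoidAlgebra.coeff_sum, Finsupp.finset_sum_apply]
  refine Finset.sum_congr rfl fun p _ => ?_
  rw [coeff_S]
  by_cases hd : n ∣ p.1
  · rw [if_pos hd, smul_mul_assoc, MonoidAlgebra.coeff_smul_apply, smul_eq_mul,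
      single_mul_apply_list, List.length_replicate]
    by_cases hp : List.replicate (p.1 / n) n <+: w
    · rw [if_pos hp, if_pos ⟨hd, hp⟩, one_mul]
      simp [C, T]
    · rw [if_neg hp, if_neg (by tauto), mul_zero]
  · rw [if_neg hd, if_neg (by tauto), zero_mul, MonoidAlgebra.coeff_zero, Finsupp.coe_zero, Pi.zero_apply]

lemma cons_suffix_tail {x : ℕ} {s t : List ℕ} (h : x :: s <:+ t) : s <:+ t.tail := by
  obtain ⟨u, rfl⟩ := h
  cases u with
  | nil => simp
  | cons y u' => exact ⟨u' ++ [x], by simp⟩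

lemma C_eq_zero (L : List (ℕ × ℂ)) : ∀ (N : ℕ) (w : List ℕ), w ≠ [] →
    w.Chain' (· ≠ ·) → (L.map Prod.fst) <:+ w.tail → C L N w = 0 := by
  induction L with
  | nil =>
    intro N w hw _ _
    rw [C_nil, if_neg (by tauto)]
  | cons p L ih =>
    obtain ⟨n, a⟩ := p
    intro N w hw hchain hsuf
    rw [C_cons]
    apply Finset.sum_eq_zero
    intro q _
    split_ifs with h
    · obtain ⟨hdvd, hpre⟩ := h
      obtain ⟨c, w', rfl⟩ : ∃ c w', w = c :: w' := by
        cases w with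
        | nil => exact absurd rfl hw
        | cons c w' => exact ⟨c, w', rfl⟩
      simp only [List.map_cons, List.tail_cons] at hsuf
      have hw' : w' ≠ [] := by
        rintro rfl
        simpa using hsuf.length_le
      match hj : q.1 / n with
      | 0 =>
        simp only [List.drop_zero]
        rw [ih q.2 (c :: w') hw hchain ((List.suffix_cons n (L.map Prod.fst)).trans
          (by simpa using hsuf)), mul_zero]
      | 1 =>
        simp only [List.drop_succ_cons, List.drop_zero]
        rw [ih q.2 w' hw' hchain.tail (cons_suffix_tail hsuf), mul_zero]
      | (j + 2) =>
        exfalso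
        rw [hj] at hpre
        rw [List.replicate_succ, List.cons_prefix_cons] at hpre
        obtain ⟨rfl, hpre⟩ := hpre
        rw [List.replicate_succ] at hpre
        obtain ⟨r, rfl⟩ := hpre
        rw [List.cons_append] at hchain
        exact (List.isChain_cons_cons.mp hchain).1 rfl
    · rfl

lemma C_main (L : List (ℕ × ℂ)) (hk : ∀ p ∈ L, 1 ≤ p.1)
    (hchain : (L.map Prod.fst).Chain' (· ≠ ·)) :
    C L (L.map Prod.fst).sum (L.map Prod.fst) = (L.map Prod.snd).prod := by
  induction L with
  | nil => simp [C_nil]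
  | cons p L ih =>
    obtain ⟨n, a⟩ := p
    simp only [List.map_cons, List.sum_cons, List.prod_cons] at hchain ⊢
    rw [C_cons]
    have hn : 0 < n := hk (n, a) (List.mem_cons_self)
    rw [Finset.sum_eq_single (n, (L.map Prod.fst).sum)]
    · rw [if_pos ⟨dvd_rfl, by rw [Nat.div_self hn]; exact ⟨_, rfl⟩⟩, Nat.div_self hn]
      simp only [pow_one, Nat.factorial_one, Nat.cast_one, div_one, List.drop_succ_cons,
        List.drop_zero]
      rw [ih (fun p hp => hk p (List.mem_cons_of_mem _ hp)) hchain.tail]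
    · rcases fun x => x with -
      intro q hq hne
      rw [Finset.HasAntidiagonal.mem_antidiagonal] at hq
      rcases q with ⟨q1, q2⟩
      split_ifs with h
      · obtain ⟨hdvd, hpre⟩ := h
        have hq1 : q1 = n * (q1 / n) := (Nat.mul_div_cancel' hdvd).symm
        simp only at hpre hq1 ⊢
        match hj : q1 / n with
        | 0 =>
          simp only [List.drop_zero]
          rw [C_eq_zero L q2 (n :: L.map Prod.fst) (by simp) hchain (by simp), mul_zero]
        | 1 =>
          exfalso
          rw [hj, mul_one] at hq1
          apply hne
          have h2 : q2 = (L.map Prod.fst).sum := by omega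
          simp [hq1, h2]
        | (j + 2) =>
          exfalso
          rw [hj] at hpre
          rw [List.replicate_succ, List.cons_prefix_cons] at hpre
          obtain ⟨-, hpre⟩ := hpre
          rw [List.replicate_succ] at hpre
          obtain ⟨r, hr⟩ := hpre
          rw [← hr] at hchain
          exact (List.isChain_cons_cons.mp hchain).1 rfl
      · rfl
    · intro hmem
      exact (hmem (by simp)).elim

end Stmt13Aux

theorem stmt13 (l : ℕ) (hl : 1 ≤ l) (k : Fin l → ℕ) (hk : ∀ i, 1 ≤ k i)
    (a : Fin l → ℂ) (ha : ∀ i, a i ≠ 0)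
    (halt : ∀ i : Fin l, ∀ h : (i : ℕ) + 1 < l, k i ≠ k ⟨(i : ℕ) + 1, h⟩) :
    (List.ofFn fun i : Fin l => expGen (k i) (a i)).prod ≠ 1 := by
  intro hcontra
  classical
  set L : List (ℕ × ℂ) := List.ofFn (fun i => (k i, a i)) with hL
  have hfst : L.map Prod.fst = List.ofFn k := by rw [hL, List.map_ofFn]; rfl
  have hsnd : L.map Prod.snd = List.ofFn a := by rw [hL, List.map_ofFn]; rfl
  have hT : Stmt13Aux.T L = 1 := by
    have h2 := congrArg (PowerSeries.map
      (Stmt13Aux.e.toAlgHom.toRingHom : FreeAlgebra ℂ ℕ →+* Stmt13Aux.R)) hcontra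
    rw [map_one, map_list_prod] at h2
    rw [Stmt13Aux.T, hL, List.map_ofFn]
    rw [List.map_ofFn] at h2
    exact h2
  have hchain : (List.ofFn k).Chain' (· ≠ ·) := by
    rw [List.Chain', List.isChain_ofFn]
    intro i hi
    exact halt ⟨i, Nat.lt_of_succ_lt hi⟩ hi
  have hk' : ∀ p ∈ L, 1 ≤ p.1 := by
    intro p hp
    rw [hL, List.mem_ofFn] at hp
    obtain ⟨i, rfl⟩ := hp
    exact hk i
  have hmain := Stmt13Aux.C_main L hk' (by rw [hfst]; exact hchain)
  rw [hfst, hsnd] at hmain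
  have hzero : Stmt13Aux.C L (List.ofFn k).sum (List.ofFn k) = 0 := by
    rw [Stmt13Aux.C, hT, PowerSeries.coeff_one, if_neg, MonoidAlgebra.coeff_zero, Finsupp.coe_zero, Pi.zero_apply]
    have hpos : 0 < (List.ofFn k).sum := by
      rw [List.sum_ofFn]
      exact Finset.sum_pos (fun i _ => hk i) ⟨⟨0, hl⟩, Finset.mem_univ _⟩
    omega
  rw [hzero] at hmain
  have hne : (List.ofFn a).prod ≠ 0 := by
    rw [List.prod_ofFn]
    exact Finset.prod_ne_zero_iff.mpr fun i _ => ha i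
  exact hne hmain.symm
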